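/- arXiv:2406.01305 — 3 statements merged into one kernel-verified Lean document; each statement's English description precedes it below -/
import Mathlib

section
/- Let p be a prime and let P be a finite non-abelian p-group. Then there exist p+1 elements a_1, ..., a_{p+1} of P that are pairwise non-commuting (a_i a_j ≠ a_j a_i for i ≠ j) and pairwise non-conjugate in P (no a_i is conjugate to a_j for i ≠ j). -/
open scoped commutatorElement

theorem nonabelian_pGroup_pairwise_noncommuting_nonconjugate
    (p : ℕ) (hp : p.Prime) (P : Type*) [Group P] [Finite P]
    (hP : IsPGroup p P) (hna : ¬ ∀ a b : P, a * b = b * a) :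
    ∃ a : Fin (p + 1) → P, ∀ i j : Fin (p + 1), i ≠ j →
      a i * a j ≠ a j * a i ∧ ¬ IsConj (a i) (a j) := by
  classical
  haveI : Fact p.Prime := ⟨hp⟩
  -- the set of normal subgroups with nonabelian quotient
  set S : Set (Subgroup P) := {N | N.Normal ∧ ¬ commutator P ≤ N} with hSdef
  have hbot : (⊥ : Subgroup P) ∈ S := by
    refine ⟨inferInstance, fun hle => hna ?_⟩
    intro x y
    have : ⁅x, y⁆ ∈ (⊥ : Subgroup P) :=
      hle (Subgroup.commutator_mem_commutator (Subgroup.mem_top x) (Subgroup.mem_top y))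
    rw [Subgroup.mem_bot, commutatorElement_eq_one_iff_mul_comm] at this
    exact this
  obtain ⟨N, hNS, hNmax'⟩ := Set.Finite.exists_maximalFor id S (Set.toFinite S) ⟨⊥, hbot⟩
  have hNmax : ∀ M ∈ S, id N ≤ id M → N = M := fun M hM h => le_antisymm h (hNmax' hM h)
  haveI : N.Normal := hNS.1
  set Q := P ⧸ N with hQdef
  have hQ : IsPGroup p Q := hP.to_quotient N
  set π : P →* Q := QuotientGroup.mk' N with hπdef
  have hπs : Function.Surjective π := QuotientGroup.mk'_surjective N
  -- key maximality property: every nontrivial normal subgroup of Q contains commutator Q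
  have hkey : ∀ M : Subgroup Q, M.Normal → M ≠ ⊥ → commutator Q ≤ M := by
    intro M hMn hMbot
    have hcomap : (M.comap π).Normal := Subgroup.Normal.comap hMn π
    have hNle : N ≤ M.comap π := by
      intro x hx
      have hx1 : π x = 1 := (QuotientGroup.eq_one_iff x).mpr hx
      rw [Subgroup.mem_comap, hx1]
      exact M.one_mem
    have hNne : N ≠ M.comap π := by
      intro h
      apply hMbot
      rw [eq_bot_iff]
      intro x hx
      obtain ⟨y, rfl⟩ := hπs x
      have : y ∈ M.comap π := hx
      rw [← h] at this
      have : π y = 1 := (QuotientGroup.eq_one_iff y).mpr this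
      simp [Subgroup.mem_bot, this]
    have hPle : commutator P ≤ M.comap π := by
      by_contra hc
      exact hNne (hNmax (M.comap π) ⟨hcomap, hc⟩ hNle)
    have : commutator Q = Subgroup.map π (commutator P) := by
      rw [commutator, commutator, Subgroup.map_commutator,
        Subgroup.map_top_of_surjective π hπs]
    rw [this]
    exact (Subgroup.map_mono hPle).trans ((Subgroup.map_comap_le π M))
  -- noncommuting elements of Q
  have hnc : ∃ a b : Q, ⁅a, b⁆ ≠ 1 := by
    have := hNS.2
    rw [commutator, Subgroup.commutator_le] at this
    push_neg at this
    obtain ⟨x, -, y, -, hxy⟩ := this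
    refine ⟨π x, π y, ?_⟩
    rw [← map_commutatorElement]
    intro h
    exact hxy ((QuotientGroup.eq_one_iff _).mp h)
  obtain ⟨a, b, hab1⟩ := hnc
  haveI : Nontrivial Q := ⟨⁅a, b⁆, 1, hab1⟩
  -- a central element of order p
  haveI : Nontrivial (Subgroup.center Q) := IsPGroup.center_nontrivial hQ
  obtain ⟨z, hz1⟩ := exists_ne (1 : Subgroup.center Q)
  have hzc : (z : Q) ∈ Subgroup.center Q := z.2
  have hzne : (z : Q) ≠ 1 := fun h => hz1 (Subtype.ext h)
  obtain ⟨k, hk⟩ := IsPGroup.iff_orderOf.mp hQ (z : Q)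
  have hkpos : k ≠ 0 := by
    rintro rfl
    rw [pow_zero, orderOf_eq_one_iff] at hk
    exact hzne hk
  set c₀ : Q := (z : Q) ^ (p ^ (k - 1)) with hc₀def
  have hc₀ord : orderOf c₀ = p := by
    rw [hc₀def, orderOf_pow, hk, Nat.gcd_eq_right (pow_dvd_pow p (Nat.sub_le k 1)),
      Nat.pow_div (Nat.sub_le k 1) hp.pos, show k - (k - 1) = 1 by omega, pow_one]
  have hc₀ne : c₀ ≠ 1 := by
    intro h
    rw [h, orderOf_one] at hc₀ord
    exact hp.one_lt.ne' hc₀ord.symm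
  have hc₀cen : c₀ ∈ Subgroup.center Q := Subgroup.pow_mem _ hzc _
  -- zpowers c₀ is a nontrivial normal subgroup
  have hzple : Subgroup.zpowers c₀ ≤ Subgroup.center Q := Subgroup.zpowers_le.mpr hc₀cen
  have hzpn : (Subgroup.zpowers c₀).Normal := by
    constructor
    intro n hn g
    have hcen := Subgroup.mem_center_iff.mp (hzple hn)
    rw [hcen g, mul_assoc, mul_inv_cancel, mul_one]
    exact hn
  have hzpbot : Subgroup.zpowers c₀ ≠ ⊥ := by
    intro h
    exact hc₀ne (by simpa [h, Subgroup.mem_bot] using Subgroup.mem_zpowers c₀)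
  have hcomm_le : commutator Q ≤ Subgroup.zpowers c₀ := hkey _ hzpn hzpbot
  -- every commutator is central and has p-th power 1
  have hcomm_cen : ∀ x y : Q, ⁅x, y⁆ ∈ Subgroup.center Q := fun x y =>
    hzple (hcomm_le (Subgroup.commutator_mem_commutator (Subgroup.mem_top x) (Subgroup.mem_top y)))
  have hcomm_p : ∀ x y : Q, ⁅x, y⁆ ^ p = 1 := by
    intro x y
    obtain ⟨t, ht⟩ := hcomm_le
      (Subgroup.commutator_mem_commutator (Subgroup.mem_top x) (Subgroup.mem_top y))
    rw [← ht]
    show (c₀ ^ t) ^ p = 1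
    rw [← zpow_natCast, ← zpow_mul, mul_comm, zpow_mul, zpow_natCast, ← hc₀ord,
      pow_orderOf_eq_one, one_zpow]
  set c : Q := ⁅a, b⁆ with hcdef
  have hcord : orderOf c = p := orderOf_eq_prime (hcomm_p a b) hab1
  have hccen : ∀ g : Q, g * c = c * g := Subgroup.mem_center_iff.mp (hcomm_cen a b)
  have habc : a * b = c * (b * a) := by
    rw [hcdef, commutatorElement_def]
    group
  -- key power relation
  have hL1 : ∀ n : ℕ, a * b ^ n = c ^ n * (b ^ n * a) := by
    intro n
    induction n with
    | zero => simp
    | succ n ih =>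
      have h0 : a * b ^ (n + 1) = a * b ^ n * b := by rw [pow_succ, mul_assoc]
      rw [h0, ih]
      calc c ^ n * (b ^ n * a) * b = c ^ n * (b ^ n * (a * b)) := by group
        _ = c ^ n * (b ^ n * (c * (b * a))) := by rw [habc]
        _ = c ^ n * (c * (b ^ n * (b * a))) := by
              rw [← mul_assoc (b ^ n) c, hccen (b ^ n), mul_assoc]
        _ = c ^ (n + 1) * (b ^ (n + 1) * a) := by rw [pow_succ, pow_succ]; group
  -- c^m = 1 implies p ∣ m
  have hcpow : ∀ m : ℕ, 0 < m → m < p → c ^ m ≠ 1 := by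
    intro m hm0 hmp h
    have : p ∣ m := hcord ▸ orderOf_dvd_of_pow_eq_one h
    have := Nat.le_of_dvd hm0 this
    omega
  -- helpers
  have hNC1 : ∀ n : ℕ, b * (a * b ^ n) ≠ (a * b ^ n) * b := by
    intro n h
    apply hcpow 1 one_pos hp.one_lt
    rw [pow_one]
    have h2 : b * a * b ^ n = a * (b ^ n * b) := by
      calc b * a * b ^ n = b * (a * b ^ n) := by group
        _ = a * b ^ n * b := h
        _ = a * (b ^ n * b) := by group
    have hbb : b ^ n * b = b * b ^ n := by rw [← pow_succ, pow_succ']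
    have h3 : b * a * b ^ n = a * b * b ^ n := by rw [h2, hbb, ← mul_assoc]
    have h4 : b * a = a * b := mul_right_cancel h3
    rw [habc] at h4
    exact right_eq_mul.mp h4
  have hC : ∀ g : Q, Commute c g := fun g => (hccen g).symm
  have hNC2 : ∀ m n : ℕ, m < n → n < p →
      (a * b ^ m) * (a * b ^ n) ≠ (a * b ^ n) * (a * b ^ m) := by
    intro m n hmn hnp h
    rw [mul_assoc a (b ^ m), mul_assoc a (b ^ n)] at h
    have h' := mul_left_cancel h
    rw [hL1 n, hL1 m] at h'
    have e1 : b ^ m * (c ^ n * (b ^ n * a)) = c ^ n * (b ^ (m + n) * a) := by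
      calc b ^ m * (c ^ n * (b ^ n * a)) = (b ^ m * c ^ n) * (b ^ n * a) :=
            (mul_assoc _ _ _).symm
        _ = (c ^ n * b ^ m) * (b ^ n * a) := by rw [((hC (b ^ m)).pow_left n).symm.eq]
        _ = c ^ n * (b ^ m * b ^ n * a) := by group
        _ = c ^ n * (b ^ (m + n) * a) := by rw [← pow_add]
    have e2 : b ^ n * (c ^ m * (b ^ m * a)) = c ^ m * (b ^ (m + n) * a) := by
      calc b ^ n * (c ^ m * (b ^ m * a)) = (b ^ n * c ^ m) * (b ^ m * a) :=
            (mul_assoc _ _ _).symm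
        _ = (c ^ m * b ^ n) * (b ^ m * a) := by rw [((hC (b ^ n)).pow_left m).symm.eq]
        _ = c ^ m * (b ^ n * b ^ m * a) := by group
        _ = c ^ m * (b ^ (m + n) * a) := by rw [← pow_add, add_comm]
    rw [e1, e2] at h'
    have hcc : c ^ n = c ^ m := mul_right_cancel h'
    have h5 : c ^ m * c ^ (n - m) = c ^ m * 1 := by
      rw [mul_one, ← pow_add, show m + (n - m) = n from by omega, hcc]
    exact hcpow (n - m) (by omega) (by omega) (mul_left_cancel h5)
  have hCJ1 : ∀ n : ℕ, ¬ IsConj b (a * b ^ n) := by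
    intro n h
    rw [isConj_iff] at h
    obtain ⟨g, hg⟩ := h
    have hkc : ∀ x : Q, x * ⁅g, b⁆ = ⁅g, b⁆ * x := Subgroup.mem_center_iff.mp (hcomm_cen g b)
    have hk2 : a * b ^ n = ⁅g, b⁆ * b := by
      rw [commutatorElement_def, ← hg]; group
    have ha : a = (⁅g, b⁆ * b) * (b ^ n)⁻¹ := eq_mul_inv_of_mul_eq hk2
    have hba : Commute b a := by
      rw [ha, mul_assoc]
      exact Commute.mul_right ((hkc b : _)) (Commute.mul_right (Commute.refl b)
        (((Commute.refl b).pow_right n).inv_right))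
    apply hab1
    have h4 := habc
    rw [hba.eq] at h4
    exact right_eq_mul.mp h4
  have hCJ2 : ∀ m n : ℕ, m < n → n < p → ¬ IsConj (a * b ^ m) (a * b ^ n) := by
    intro m n hmn hnp h
    rw [isConj_iff] at h
    obtain ⟨g, hg⟩ := h
    have hkc : ∀ x : Q, x * ⁅g, a * b ^ m⁆ = ⁅g, a * b ^ m⁆ * x :=
      Subgroup.mem_center_iff.mp (hcomm_cen g (a * b ^ m))
    have h1 : a * b ^ n = ⁅g, a * b ^ m⁆ * (a * b ^ m) := by
      rw [commutatorElement_def, ← hg]; group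
    have h2 : a * b ^ n = a * (⁅g, a * b ^ m⁆ * b ^ m) := by
      rw [h1, ← mul_assoc, ← hkc a, mul_assoc]
    have h3 : b ^ n = ⁅g, a * b ^ m⁆ * b ^ m := mul_left_cancel h2
    have h4 : b ^ (n - m) = ⁅g, a * b ^ m⁆ := by
      have : b ^ (n - m) * b ^ m = ⁅g, a * b ^ m⁆ * b ^ m := by
        rw [← pow_add, show n - m + m = n from by omega, h3]
      exact mul_right_cancel this
    have h5 : a * b ^ (n - m) = b ^ (n - m) * a := by
      rw [h4]; exact hkc a
    rw [hL1 (n - m)] at h5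
    have h6 : c ^ (n - m) * (b ^ (n - m) * a) = 1 * (b ^ (n - m) * a) := by
      rw [one_mul, h5]
    exact hcpow (n - m) (by omega) (by omega) (mul_right_cancel h6)
  -- the family in Q
  set A : Fin (p + 1) → Q := fun i => if (i : ℕ) = 0 then b else a * b ^ ((i : ℕ) - 1)
    with hAdef
  have main : ∀ i j : Fin (p + 1), (i : ℕ) < (j : ℕ) →
      (A i * A j ≠ A j * A i ∧ ¬ IsConj (A i) (A j)) := by
    intro i j hij
    have hjne : (j : ℕ) ≠ 0 := by omega
    have hjlt : (j : ℕ) - 1 < p := by have := j.isLt; omega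
    by_cases hi : (i : ℕ) = 0
    · simp only [hAdef, if_pos hi, if_neg hjne]
      exact ⟨hNC1 _, hCJ1 _⟩
    · simp only [hAdef, if_neg hi, if_neg hjne]
      have hlt : (i : ℕ) - 1 < (j : ℕ) - 1 := by omega
      exact ⟨hNC2 _ _ hlt hjlt, hCJ2 _ _ hlt hjlt⟩
  have hQmain : ∀ i j : Fin (p + 1), i ≠ j →
      (A i * A j ≠ A j * A i ∧ ¬ IsConj (A i) (A j)) := by
    intro i j hij
    rcases lt_or_gt_of_ne (fun h : (i : ℕ) = (j : ℕ) => hij (Fin.ext h)) with h | h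
    · exact main i j h
    · obtain ⟨h1, h2⟩ := main j i h
      exact ⟨fun e => h1 e.symm, fun e => h2 e.symm⟩
  -- lift to P
  choose aP haP using fun i => hπs (A i)
  refine ⟨aP, fun i j hij => ⟨?_, ?_⟩⟩
  · intro h
    apply (hQmain i j hij).1
    have := congrArg π h
    simpa only [map_mul, haP] using this
  · intro h
    exact (hQmain i j hij).2 (by simpa only [haP] using π.map_isConj h)
end

section
/- Let G be an EPPO group. Then Γ_NCC(G) is claw-free. -/
/-- The set of conjugacy classes of non-central elements of `G`. -/
def NCClass (G : Type*) [Group G] : Type _ :=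
  {c : ConjClasses G // ∃ x : G, ConjClasses.mk x = c ∧ x ∉ Subgroup.center G}

/-- The conjugacy class graph associated to a property `P` of subgroups:
two distinct non-central conjugacy classes are adjacent iff they have
representatives `a`, `b` with `P ⟨a, b⟩`. -/
def classGraph (G : Type*) [Group G] (P : Subgroup G → Prop) :
    SimpleGraph (NCClass G) where
  Adj c d := c ≠ d ∧ ∃ a b : G, ConjClasses.mk a = c.1 ∧ ConjClasses.mk b = d.1 ∧
    P (Subgroup.closure {a, b})
  symm := ⟨by
    rintro c d ⟨hne, a, b, ha, hb, hP⟩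
    refine ⟨hne.symm, b, a, hb, ha, ?_⟩
    rwa [Set.pair_comm]⟩
  loopless := ⟨by rintro c ⟨hne, -⟩; exact hne rfl⟩

/-- The commuting conjugacy class graph `Γ_CCC(G)`. -/
def cccGraph (G : Type*) [Group G] : SimpleGraph (NCClass G) :=
  classGraph G (fun H => ∀ x ∈ H, ∀ y ∈ H, x * y = y * x)

/-- The nilpotent conjugacy class graph `Γ_NCC(G)`. -/
def nccGraph (G : Type*) [Group G] : SimpleGraph (NCClass G) :=
  classGraph G (fun H => Group.IsNilpotent H)

/-- The solvable conjugacy class graph `Γ_SCC(G)`. -/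
def sccGraph (G : Type*) [Group G] : SimpleGraph (NCClass G) :=
  classGraph G (fun H => IsSolvable H)

/-- A graph contains an induced path `P₄` on four vertices. -/
def HasInducedP4 {V : Type*} (Γ : SimpleGraph V) : Prop :=
  ∃ a b c d : V, a ≠ b ∧ a ≠ c ∧ a ≠ d ∧ b ≠ c ∧ b ≠ d ∧ c ≠ d ∧
    Γ.Adj a b ∧ Γ.Adj b c ∧ Γ.Adj c d ∧ ¬Γ.Adj a c ∧ ¬Γ.Adj a d ∧ ¬Γ.Adj b d

/-- A graph is a cograph iff it has no induced `P₄`. -/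
def IsCograph {V : Type*} (Γ : SimpleGraph V) : Prop := ¬ HasInducedP4 Γ

/-- A graph contains an induced cycle `Cₙ`. -/
def HasInducedCycle {V : Type*} (Γ : SimpleGraph V) (n : ℕ) : Prop :=
  ∃ f : ZMod n → V, Function.Injective f ∧
    ∀ i j : ZMod n, Γ.Adj (f i) (f j) ↔ (j = i + 1 ∨ i = j + 1)

/-- A graph is chordal iff it has no induced cycle `Cₙ` for `n ≥ 4`. -/
def IsChordal {V : Type*} (Γ : SimpleGraph V) : Prop :=
  ∀ n : ℕ, 4 ≤ n → ¬ HasInducedCycle Γ n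

/-- A graph contains an induced `2K₂`. -/
def Has2K2 {V : Type*} (Γ : SimpleGraph V) : Prop :=
  ∃ a b c d : V, a ≠ b ∧ a ≠ c ∧ a ≠ d ∧ b ≠ c ∧ b ≠ d ∧ c ≠ d ∧
    Γ.Adj a b ∧ Γ.Adj c d ∧ ¬Γ.Adj a c ∧ ¬Γ.Adj a d ∧ ¬Γ.Adj b c ∧ ¬Γ.Adj b d

/-- A graph contains an induced claw `K_{1,3}`: a vertex with three pairwise
non-adjacent neighbours. -/
def HasClaw {V : Type*} (Γ : SimpleGraph V) : Prop :=
  ∃ v a b c : V, a ≠ b ∧ a ≠ c ∧ b ≠ c ∧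
    Γ.Adj v a ∧ Γ.Adj v b ∧ Γ.Adj v c ∧ ¬Γ.Adj a b ∧ ¬Γ.Adj a c ∧ ¬Γ.Adj b c

/-- A graph is claw-free iff it has no induced `K_{1,3}`. -/
def IsClawFree {V : Type*} (Γ : SimpleGraph V) : Prop := ¬ HasClaw Γ

/-- A graph is split iff it has no induced `C₄`, `C₅` or `2K₂`. -/
def IsSplit {V : Type*} (Γ : SimpleGraph V) : Prop :=
  ¬ HasInducedCycle Γ 4 ∧ ¬ HasInducedCycle Γ 5 ∧ ¬ Has2K2 Γ

/-- A graph is threshold iff it has no induced `P₄`, `C₄`, `C₅` or `2K₂`. -/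
def IsThreshold {V : Type*} (Γ : SimpleGraph V) : Prop :=
  ¬ HasInducedP4 Γ ∧ ¬ HasInducedCycle Γ 4 ∧ ¬ HasInducedCycle Γ 5 ∧ ¬ Has2K2 Γ

/-- An EPPO group: every non-identity element has prime power order. -/
def IsEPPO (G : Type*) [Group G] : Prop :=
  ∀ g : G, g ≠ 1 → IsPrimePow (orderOf g)

set_option linter.unusedSectionVars false

section AuxEPPO

variable {G : Type*} [Group G] [Finite G]

/-- The cyclic subgroup generated by an element of prime power order is a `p`-group. -/
lemma isPGroup_zpowers_of_orderOf {p i : ℕ} (hp : p.Prime) {g : G} (h : orderOf g = p ^ i) :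
    IsPGroup p (Subgroup.zpowers g) := by
  haveI : Fact p.Prime := ⟨hp⟩
  rw [IsPGroup.iff_orderOf]
  intro y
  have h1 : orderOf y ∣ p ^ i := by
    rw [← h, ← Nat.card_zpowers g]
    exact orderOf_dvd_natCard y
  obtain ⟨k, -, hk⟩ := (Nat.dvd_prime_pow hp).mp h1
  exact ⟨k, hk⟩

/-- In a finite nilpotent group, two elements whose orders are powers of distinct
primes commute. -/
lemma commute_of_nilpotent_coprime {H : Type*} [Group H] [Finite H]
    (hH : Group.IsNilpotent H) {p q : ℕ} (hp : p.Prime) (hq : q.Prime) (hpq : p ≠ q)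
    {x a : H} {i j : ℕ} (hx : orderOf x = p ^ i) (ha : orderOf a = q ^ j) :
    Commute x a := by
  haveI : Fact p.Prime := ⟨hp⟩
  haveI : Fact q.Prime := ⟨hq⟩
  obtain ⟨P, hP⟩ := (isPGroup_zpowers_of_orderOf hp hx).exists_le_sylow
  obtain ⟨Q, hQ⟩ := (isPGroup_zpowers_of_orderOf hq ha).exists_le_sylow
  have hnorm := (isNilpotent_of_finite_tfae (G := H)).out 0 3
  have hPn : (P : Subgroup H).Normal := hnorm.mp hH p ⟨hp⟩ P
  have hQn : (Q : Subgroup H).Normal := hnorm.mp hH q ⟨hq⟩ Q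
  have hdis : Disjoint (P : Subgroup H) (Q : Subgroup H) :=
    IsPGroup.disjoint_of_ne p q hpq _ _ P.isPGroup' Q.isPGroup'
  exact Subgroup.commute_of_normal_of_disjoint _ _ hPn hQn hdis x a
    (hP (Subgroup.mem_zpowers x)) (hQ (Subgroup.mem_zpowers a))

/-- In an EPPO group, if the closure of two nontrivial elements is nilpotent, then
any prime dividing the order of one divides the order of the other. -/
lemma eppo_dvd_of_nilpotent (hG : IsEPPO G) {x a : G} (hx1 : x ≠ 1) (ha1 : a ≠ 1)
    (hnil : Group.IsNilpotent (Subgroup.closure ({x, a} : Set G)))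
    {p : ℕ} (hp : p.Prime) (hpx : p ∣ orderOf x) : p ∣ orderOf a := by
  by_contra hpa
  obtain ⟨q, j, hq, hj, hqa⟩ := hG a ha1
  rw [← Nat.prime_iff] at hq
  obtain ⟨p', i, hp', hi, hpx'⟩ := hG x hx1
  rw [← Nat.prime_iff] at hp'
  have hpp' : p = p' := by
    rw [← hpx'] at hpx
    exact (Nat.prime_dvd_prime_iff_eq hp hp').mp (hp.dvd_of_dvd_pow hpx)
  subst hpp'
  have hpq : p ≠ q := by
    rintro rfl
    exact hpa (hqa ▸ dvd_pow_self p hj.ne')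
  set H := Subgroup.closure ({x, a} : Set G) with hHdef
  have hxH : x ∈ H := Subgroup.subset_closure (Set.mem_insert _ _)
  have haH : a ∈ H := Subgroup.subset_closure (Set.mem_insert_of_mem _ rfl)
  have hcomm : Commute (⟨x, hxH⟩ : H) ⟨a, haH⟩ := by
    apply commute_of_nilpotent_coprime hnil hp hq hpq (i := i) (j := j)
    · rw [Subgroup.orderOf_mk]; exact hpx'.symm
    · rw [Subgroup.orderOf_mk]; exact hqa.symm
  have hcommG : Commute x a := by
    have := congrArg (Subtype.val) hcomm
    simp at this; exact this
  have hcop : (orderOf x).Coprime (orderOf a) := by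
    rw [← hpx', ← hqa]
    exact Nat.Coprime.pow i j ((Nat.coprime_primes hp hq).mpr hpq)
  have hord : orderOf (x * a) = orderOf x * orderOf a :=
    hcommG.orderOf_mul_eq_mul_orderOf_of_coprime hcop
  have hne : x * a ≠ 1 := by
    intro hxa
    apply hpa
    have hax : a = x⁻¹ := by
      rw [eq_inv_iff_mul_eq_one, ← hcommG.eq]; exact hxa
    rw [hax, orderOf_inv]
    exact hpx
  obtain ⟨r, k, hr, hk, hrk⟩ := hG (x * a) hne
  rw [← Nat.prime_iff] at hr
  have hpdvd : p ∣ r ^ k := by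
    rw [hrk, hord]; exact Dvd.dvd.mul_right hpx _
  have hqdvd : q ∣ r ^ k := by
    rw [hrk, hord, ← hqa]
    exact Dvd.dvd.mul_left (dvd_pow_self q hj.ne') _
  have hpr : p = r := (Nat.prime_dvd_prime_iff_eq hp hr).mp (hp.dvd_of_dvd_pow hpdvd)
  have hqr : q = r := (Nat.prime_dvd_prime_iff_eq hq hr).mp (hq.dvd_of_dvd_pow hqdvd)
  exact hpq (hpr.trans hqr.symm)

/-- A representative of a non-central conjugacy class is nontrivial. -/
lemma NCClass.rep_ne_one {g : G} {c : NCClass G} (h : ConjClasses.mk g = c.1) : g ≠ 1 := by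
  obtain ⟨y, hy, hyc⟩ := c.2
  rintro rfl
  have : IsConj 1 y := ConjClasses.mk_eq_mk_iff_isConj.mp (h.trans hy.symm)
  rw [isConj_one_right] at this
  exact hyc (this ▸ Subgroup.one_mem _)

/-- In an EPPO group, every element of prime power order with `p` dividing its order
has order a power of `p`. -/
lemma eppo_orderOf_eq_pow (hG : IsEPPO G) {g : G} (hg : g ≠ 1) {p : ℕ} (hp : p.Prime)
    (hpg : p ∣ orderOf g) : ∃ i : ℕ, orderOf g = p ^ i := by
  obtain ⟨q, j, hq, hj, hqg⟩ := hG g hg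
  rw [← Nat.prime_iff] at hq
  have : p = q := by
    rw [← hqg] at hpg
    exact (Nat.prime_dvd_prime_iff_eq hp hq).mp (hp.dvd_of_dvd_pow hpg)
  exact ⟨j, this ▸ hqg.symm⟩

end AuxEPPO

theorem eppo_ncc_clawFree (G : Type*) [Group G] [Finite G] (hG : IsEPPO G) :
    IsClawFree (nccGraph G) := by
  rintro ⟨v, a, b, c, hab, hac, hbc, hva, hvb, hvc, hnab, hnac, hnbc⟩
  obtain ⟨-, x1, a0, hx1, ha0, hnil1⟩ := hva
  obtain ⟨-, x2, b0, hx2, hb0, hnil2⟩ := hvb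
  have hx1ne : x1 ≠ 1 := NCClass.rep_ne_one hx1
  have hx2ne : x2 ≠ 1 := NCClass.rep_ne_one hx2
  have ha0ne : a0 ≠ 1 := NCClass.rep_ne_one ha0
  have hb0ne : b0 ≠ 1 := NCClass.rep_ne_one hb0
  obtain ⟨p, i, hp', hi, hpx1⟩ := hG x1 hx1ne
  rw [← Nat.prime_iff] at hp'
  haveI : Fact p.Prime := ⟨hp'⟩
  have hpdvd1 : p ∣ orderOf x1 := hpx1 ▸ dvd_pow_self p hi.ne'
  have hord12 : orderOf x1 = orderOf x2 := by
    obtain ⟨u, hu⟩ := ConjClasses.mk_eq_mk_iff_isConj.mp (hx1.trans hx2.symm)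
    exact hu.orderOf_eq _
  have hpdvd2 : p ∣ orderOf x2 := hord12 ▸ hpdvd1
  have hpa : p ∣ orderOf a0 := eppo_dvd_of_nilpotent hG hx1ne ha0ne hnil1 hp' hpdvd1
  have hpb : p ∣ orderOf b0 := eppo_dvd_of_nilpotent hG hx2ne hb0ne hnil2 hp' hpdvd2
  obtain ⟨ia, hia⟩ := eppo_orderOf_eq_pow hG ha0ne hp' hpa
  obtain ⟨ib, hib⟩ := eppo_orderOf_eq_pow hG hb0ne hp' hpb
  obtain ⟨P, hPa⟩ := (isPGroup_zpowers_of_orderOf hp' hia).exists_le_sylow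
  obtain ⟨Q, hQb⟩ := (isPGroup_zpowers_of_orderOf hp' hib).exists_le_sylow
  obtain ⟨g, hg⟩ := MulAction.exists_smul_eq G Q P
  have hb' : g * b0 * g⁻¹ ∈ (P : Subgroup G) := by
    rw [← hg, Sylow.coe_subgroup_smul]
    have := Subgroup.smul_mem_pointwise_smul b0 (MulAut.conj g) (Q : Subgroup G)
      (hQb (Subgroup.mem_zpowers b0))
    simpa [MulAut.smul_def] using this
  have hle : Subgroup.closure ({a0, g * b0 * g⁻¹} : Set G) ≤ (P : Subgroup G) := by
    rw [Subgroup.closure_le, Set.insert_subset_iff, Set.singleton_subset_iff]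
    exact ⟨hPa (Subgroup.mem_zpowers a0), hb'⟩
  have hpg : IsPGroup p (Subgroup.closure ({a0, g * b0 * g⁻¹} : Set G)) :=
    P.isPGroup'.to_le hle
  have hnil : Group.IsNilpotent (Subgroup.closure ({a0, g * b0 * g⁻¹} : Set G)) :=
    hpg.isNilpotent
  refine hnab ⟨hab, a0, g * b0 * g⁻¹, ha0, ?_, hnil⟩
  rw [← hb0]
  exact ConjClasses.mk_eq_mk_iff_isConj.mpr (isConj_iff.mpr ⟨g, rfl⟩) |>.symm
end

section
/- Let G be a finite nilpotent group and let p and q be distinct primes such that some Sylow p-subgroup of G and some Sylow q-subgroup of G are both non-abelian. Then Γ_CCC(G) contains an induced path P_4 on four vertices and an induced cycle C_4 on four vertices; in particular, Γ_CCC(G) is neither a cograph nor a chordal graph. -/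
section CCCAux

open Subgroup

variable {G : Type*} [Group G]

private lemma closure_pair_comm {a b : G} (h : a * b = b * a) :
    ∀ x ∈ Subgroup.closure ({a, b} : Set G), ∀ y ∈ Subgroup.closure ({a, b} : Set G),
      x * y = y * x := by
  intro x hx y hy
  have key : ∀ z : G, z = a ∨ z = b → z ∈ Subgroup.centralizer ({a, b} : Set G) := by
    intro z hz
    rw [Subgroup.mem_centralizer_iff]
    intro w hw
    rcases hw with rfl | hw
    · rcases hz with rfl | rfl
      · rfl
      · exact h
    · rw [Set.mem_singleton_iff] at hw; subst hw
      rcases hz with rfl | rfl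
      · exact h.symm
      · rfl
  have hy' : y ∈ Subgroup.centralizer ({a, b} : Set G) :=
    (Subgroup.closure_le _).mpr (fun z hz => key z (by simpa using hz)) hy
  have hya : a * y = y * a := Subgroup.mem_centralizer_iff.mp hy' a (by simp)
  have hyb : b * y = y * b := Subgroup.mem_centralizer_iff.mp hy' b (by simp)
  have hx' : x ∈ Subgroup.centralizer ({y} : Set G) := by
    refine (Subgroup.closure_le _).mpr ?_ hx
    intro z hz
    rw [SetLike.mem_coe, Subgroup.mem_centralizer_iff]
    intro w hw
    rw [Set.mem_singleton_iff] at hw; subst hw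
    rcases (by simpa using hz : z = a ∨ z = b) with rfl | rfl
    · exact hya.symm
    · exact hyb.symm
  exact (Subgroup.mem_centralizer_iff.mp hx' y rfl).symm

private lemma cccAdj {c d : NCClass G} (hne : c ≠ d) {a b : G}
    (ha : ConjClasses.mk a = c.1) (hb : ConjClasses.mk b = d.1) (hab : a * b = b * a) :
    (cccGraph G).Adj c d :=
  ⟨hne, a, b, ha, hb, closure_pair_comm hab⟩

private lemma ccc_not_adj {x y : G} {c d : NCClass G}
    (hc : ConjClasses.mk x = c.1) (hd : ConjClasses.mk y = d.1)
    (hN : ∀ g h : G, ¬ (g * x * g⁻¹) * (h * y * h⁻¹) = (h * y * h⁻¹) * (g * x * g⁻¹)) :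
    ¬ (cccGraph G).Adj c d := by
  rintro ⟨-, a, b, ha, hb, hab⟩
  obtain ⟨g, hg⟩ := isConj_iff.mp (ConjClasses.mk_eq_mk_iff_isConj.mp (hc.trans ha.symm))
  obtain ⟨h, hh⟩ := isConj_iff.mp (ConjClasses.mk_eq_mk_iff_isConj.mp (hd.trans hb.symm))
  subst hg; subst hh
  exact hN g h (hab _ (Subgroup.subset_closure (by simp)) _ (Subgroup.subset_closure (by simp)))

private lemma mk_ne_of_prime_dvd {r : ℕ} {a b : G}
    (h1 : r ∣ orderOf a) (h2 : ¬ r ∣ orderOf b) :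
    ConjClasses.mk a ≠ ConjClasses.mk b := by
  intro he
  obtain ⟨c, hc⟩ := isConj_iff.mp (ConjClasses.mk_eq_mk_iff_isConj.mp he)
  have h3 : orderOf (c * a * c⁻¹) = orderOf a := by
    have := orderOf_injective (MulAut.conj c).toMonoidHom (MulEquiv.injective _) a
    simpa [MulAut.conj_apply] using this
  exact h2 (by rw [← hc, h3]; exact h1)

private lemma exists_order_eq_pow [Finite G] {p : ℕ} (hp : p.Prime) (P : Sylow p G) {x : G}
    (hx : x ∈ (P : Subgroup G)) : ∃ j, orderOf x = p ^ j := by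
  obtain ⟨k, hk⟩ := P.isPGroup' ⟨x, hx⟩
  have hx1 : x ^ (p ^ k) = 1 := by
    have := congrArg (fun t : (P : Subgroup G) => (t : G)) hk
    push_cast at this
    exact this
  obtain ⟨j, -, hj⟩ := (Nat.dvd_prime_pow hp).mp (orderOf_dvd_of_pow_eq_one hx1)
  exact ⟨j, hj⟩

private lemma sylow_exists_noncomm [Finite G]
    (hnil : Group.IsNilpotent G) {p : ℕ} (hp : p.Prime) (P : Sylow p G)
    (hP : ¬ ∀ a b : (P : Subgroup G), a * b = b * a) :
    ∃ x y : G, x ∈ (P : Subgroup G) ∧ y ∈ (P : Subgroup G) ∧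
      ∀ g h : G, ¬ (g * x * g⁻¹) * (h * y * h⁻¹) = (h * y * h⁻¹) * (g * x * g⁻¹) := by
  haveI := Fact.mk hp
  have hnorm : ∀ (r : ℕ) (_ : Fact r.Prime) (R : Sylow r G), (R : Subgroup G).Normal :=
    (isNilpotent_of_finite_tfae.out 0 3).mp hnil
  haveI hPn : (P : Subgroup G).Normal := hnorm p ⟨hp⟩ P
  set C : Subgroup G := Subgroup.centralizer ((P : Subgroup G) : Set G) with hC
  haveI hCn : C.Normal := by
    constructor
    intro n hn g
    rw [hC, Subgroup.mem_centralizer_iff] at hn ⊢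
    intro b hb
    have hb' : g⁻¹ * b * g ∈ (P : Subgroup G) := by
      have := hPn.conj_mem b hb g⁻¹
      simpa using this
    have hnb := hn _ hb'
    calc b * (g * n * g⁻¹) = g * ((g⁻¹ * b * g) * n) * g⁻¹ := by group
      _ = g * (n * (g⁻¹ * b * g)) * g⁻¹ := by rw [hnb]
      _ = (g * n * g⁻¹) * b := by group
  have htop : (P : Subgroup G) ⊔ C = ⊤ := by
    by_contra hne
    obtain ⟨r, hr, hrdvd⟩ :=
      Nat.exists_prime_and_dvd (fun h1 => hne (Subgroup.index_eq_one.mp h1))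
    haveI := Fact.mk hr
    rcases eq_or_ne r p with rfl | hrp
    · exact P.not_dvd_index (hrdvd.trans (Subgroup.index_dvd_of_le le_sup_left))
    · obtain ⟨R⟩ := (Sylow.nonempty : Nonempty (Sylow r G))
      haveI hRn : (R : Subgroup G).Normal := hnorm r ⟨hr⟩ R
      have hRC : (R : Subgroup G) ≤ C := by
        intro a ha
        rw [hC, Subgroup.mem_centralizer_iff]
        intro b hb
        exact Subgroup.commute_of_normal_of_disjoint _ _ hPn hRn
          (IsPGroup.disjoint_of_ne p r (Ne.symm hrp) _ _ P.isPGroup' R.isPGroup')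
          b a hb ha
      exact R.not_dvd_index
        (hrdvd.trans (Subgroup.index_dvd_of_le (hRC.trans le_sup_right)))
  have hconj : ∀ g a : G, a ∈ (P : Subgroup G) →
      ∃ k, k ∈ (P : Subgroup G) ∧ g * a * g⁻¹ = k * a * k⁻¹ := by
    intro g a ha
    have hg : g ∈ ((P : Subgroup G) ⊔ C : Subgroup G) := htop ▸ Subgroup.mem_top g
    have hg' : g ∈ (((P : Subgroup G) ⊔ C : Subgroup G) : Set G) := hg
    rw [Subgroup.mul_normal (P : Subgroup G) C, Set.mem_mul] at hg'
    obtain ⟨k, hk, c, hc, rfl⟩ := hg'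
    refine ⟨k, hk, ?_⟩
    have hac : a * c = c * a := Subgroup.mem_centralizer_iff.mp hc a ha
    have hfix : c * a * c⁻¹ = a := by rw [← hac]; simp
    calc (k * c) * a * (k * c)⁻¹ = k * (c * a * c⁻¹) * k⁻¹ := by group
      _ = k * a * k⁻¹ := by rw [hfix]
  -- find the element x₀ central mod center, noncentral
  push_neg at hP
  obtain ⟨a, b, hab⟩ := hP
  have haZ : a ∉ Subgroup.center (P : Subgroup G) := fun h =>
    hab (Subgroup.mem_center_iff.mp h b).symm
  haveI : Nontrivial ((P : Subgroup G) ⧸ Subgroup.center (P : Subgroup G)) :=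
    ⟨⟨(a : (P : Subgroup G) ⧸ Subgroup.center (P : Subgroup G)), 1,
      fun he => haZ ((QuotientGroup.eq_one_iff a).mp he)⟩⟩
  have hpq : IsPGroup p ((P : Subgroup G) ⧸ Subgroup.center (P : Subgroup G)) :=
    P.isPGroup'.to_quotient _
  haveI := hpq.center_nontrivial
  obtain ⟨z, hzne⟩ :=
    exists_ne (1 : Subgroup.center ((P : Subgroup G) ⧸ Subgroup.center (P : Subgroup G)))
  obtain ⟨x₀, hx₀⟩ := QuotientGroup.mk_surjective z.1
  have hcen : ∀ k : (P : Subgroup G),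
      x₀⁻¹ * (k⁻¹ * x₀ * k) ∈ Subgroup.center (P : Subgroup G) := by
    intro k
    rw [← QuotientGroup.eq_one_iff]
    have hc1 : ((x₀⁻¹ * (k⁻¹ * x₀ * k) : (P : Subgroup G)) :
        (P : Subgroup G) ⧸ Subgroup.center (P : Subgroup G)) =
        (↑x₀)⁻¹ * ((↑k)⁻¹ * ↑x₀ * ↑k) := rfl
    rw [hc1, hx₀]
    have hzc := Subgroup.mem_center_iff.mp z.2 ((k : (P : Subgroup G)) :
      (P : Subgroup G) ⧸ Subgroup.center (P : Subgroup G))⁻¹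
    rw [hzc]
    group
  have hx₀Z : x₀ ∉ Subgroup.center (P : Subgroup G) := by
    intro h
    apply hzne
    apply Subtype.ext
    rw [← hx₀]
    exact (QuotientGroup.eq_one_iff x₀).mpr h
  have hy₀ : ∃ y₀ : (P : Subgroup G), y₀ * x₀ ≠ x₀ * y₀ := by
    by_contra hcon
    push_neg at hcon
    exact hx₀Z (Subgroup.mem_center_iff.mpr hcon)
  obtain ⟨y₀, hy₀⟩ := hy₀
  refine ⟨(x₀ : G), (y₀ : G), x₀.2, y₀.2, ?_⟩
  intro g h hgh
  have hc2 : (x₀ : G) * ((g⁻¹ * h) * (y₀ : G) * (g⁻¹ * h)⁻¹) =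
      ((g⁻¹ * h) * (y₀ : G) * (g⁻¹ * h)⁻¹) * (x₀ : G) := by
    have h2 : g * ((x₀ : G) * ((g⁻¹ * h) * (y₀ : G) * (g⁻¹ * h)⁻¹)) * g⁻¹ =
        g * (((g⁻¹ * h) * (y₀ : G) * (g⁻¹ * h)⁻¹) * (x₀ : G)) * g⁻¹ := by
      calc g * ((x₀ : G) * ((g⁻¹ * h) * (y₀ : G) * (g⁻¹ * h)⁻¹)) * g⁻¹
          = (g * (x₀ : G) * g⁻¹) * (h * (y₀ : G) * h⁻¹) := by group
        _ = (h * (y₀ : G) * h⁻¹) * (g * (x₀ : G) * g⁻¹) := hgh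
        _ = g * (((g⁻¹ * h) * (y₀ : G) * (g⁻¹ * h)⁻¹) * (x₀ : G)) * g⁻¹ := by group
    exact mul_left_cancel (mul_right_cancel h2)
  obtain ⟨k, hk, hky⟩ := hconj (g⁻¹ * h) (y₀ : G) y₀.2
  rw [hky] at hc2
  have hcH : x₀ * ((⟨k, hk⟩ : (P : Subgroup G)) * y₀ * (⟨k, hk⟩ : (P : Subgroup G))⁻¹) =
      ((⟨k, hk⟩ : (P : Subgroup G)) * y₀ * (⟨k, hk⟩ : (P : Subgroup G))⁻¹) * x₀ := by
    apply Subtype.ext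
    push_cast
    exact hc2
  set k' : (P : Subgroup G) := (⟨k, hk⟩ : (P : Subgroup G)) with hk'
  set z' : (P : Subgroup G) := x₀⁻¹ * (k'⁻¹ * x₀ * k') with hz'
  have hz'c : z' ∈ Subgroup.center (P : Subgroup G) := hcen k'
  have hkey : k'⁻¹ * x₀ * k' = x₀ * z' := by rw [hz']; group
  have hc3 : (x₀ * z') * y₀ = y₀ * (x₀ * z') := by
    rw [← hkey]
    calc (k'⁻¹ * x₀ * k') * y₀ = k'⁻¹ * (x₀ * (k' * y₀ * k'⁻¹)) * k' := by group
      _ = k'⁻¹ * ((k' * y₀ * k'⁻¹) * x₀) * k' := by rw [hcH]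
      _ = y₀ * (k'⁻¹ * x₀ * k') := by group
  have hyz : y₀ * z' = z' * y₀ := Subgroup.mem_center_iff.mp hz'c y₀
  apply hy₀
  have hfin : y₀ * x₀ * z' = x₀ * y₀ * z' := by
    calc y₀ * x₀ * z' = y₀ * (x₀ * z') := by group
      _ = (x₀ * z') * y₀ := hc3.symm
      _ = x₀ * (z' * y₀) := by group
      _ = x₀ * (y₀ * z') := by rw [← hyz]
      _ = x₀ * y₀ * z' := by group
  exact mul_right_cancel hfin

private lemma ccc_not_adj_mul {x y v : G} {c d : NCClass G} {Pg Qg : Subgroup G}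
    (hPn : Pg.Normal) (hQn : Qg.Normal) (hxP : x ∈ Pg) (hvQ : v ∈ Qg)
    (hPQ : ∀ a ∈ Pg, ∀ b ∈ Qg, a * b = b * a)
    (hc : ConjClasses.mk x = c.1) (hd : ConjClasses.mk (y * v) = d.1)
    (hN : ∀ g h : G, ¬ (g * x * g⁻¹) * (h * y * h⁻¹) = (h * y * h⁻¹) * (g * x * g⁻¹)) :
    ¬ (cccGraph G).Adj c d := by
  rintro ⟨-, a, b, ha, hb, hab⟩
  obtain ⟨g, hg⟩ := isConj_iff.mp (ConjClasses.mk_eq_mk_iff_isConj.mp (hc.trans ha.symm))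
  obtain ⟨h, hh⟩ := isConj_iff.mp (ConjClasses.mk_eq_mk_iff_isConj.mp (hd.trans hb.symm))
  subst hg; subst hh
  have hab' := hab (g * x * g⁻¹) (Subgroup.subset_closure (by simp))
    (h * (y * v) * h⁻¹) (Subgroup.subset_closure (by simp))
  have hsplit : h * (y * v) * h⁻¹ = (h * y * h⁻¹) * (h * v * h⁻¹) := by group
  rw [hsplit] at hab'
  have hcom : (g * x * g⁻¹) * (h * v * h⁻¹) = (h * v * h⁻¹) * (g * x * g⁻¹) :=
    hPQ _ (hPn.conj_mem x hxP g) _ (hQn.conj_mem v hvQ h)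
  refine hN g h ?_
  have key : (g * x * g⁻¹) * (h * y * h⁻¹) * (h * v * h⁻¹) =
      (h * y * h⁻¹) * (g * x * g⁻¹) * (h * v * h⁻¹) := by
    calc (g * x * g⁻¹) * (h * y * h⁻¹) * (h * v * h⁻¹)
        = (g * x * g⁻¹) * ((h * y * h⁻¹) * (h * v * h⁻¹)) := by group
      _ = ((h * y * h⁻¹) * (h * v * h⁻¹)) * (g * x * g⁻¹) := hab'
      _ = (h * y * h⁻¹) * ((h * v * h⁻¹) * (g * x * g⁻¹)) := by group
      _ = (h * y * h⁻¹) * ((g * x * g⁻¹) * (h * v * h⁻¹)) := by rw [← hcom]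
      _ = (h * y * h⁻¹) * (g * x * g⁻¹) * (h * v * h⁻¹) := by group
  exact mul_right_cancel key

private lemma ccc_not_adj_mul' {u y v : G} {c d : NCClass G} {Pg Qg : Subgroup G}
    (hPn : Pg.Normal) (hQn : Qg.Normal) (huQ : u ∈ Qg) (hyP : y ∈ Pg)
    (hPQ : ∀ a ∈ Pg, ∀ b ∈ Qg, a * b = b * a)
    (hc : ConjClasses.mk u = c.1) (hd : ConjClasses.mk (y * v) = d.1)
    (hN : ∀ g h : G, ¬ (g * u * g⁻¹) * (h * v * h⁻¹) = (h * v * h⁻¹) * (g * u * g⁻¹)) :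
    ¬ (cccGraph G).Adj c d := by
  rintro ⟨-, a, b, ha, hb, hab⟩
  obtain ⟨g, hg⟩ := isConj_iff.mp (ConjClasses.mk_eq_mk_iff_isConj.mp (hc.trans ha.symm))
  obtain ⟨h, hh⟩ := isConj_iff.mp (ConjClasses.mk_eq_mk_iff_isConj.mp (hd.trans hb.symm))
  subst hg; subst hh
  have hab' := hab (g * u * g⁻¹) (Subgroup.subset_closure (by simp))
    (h * (y * v) * h⁻¹) (Subgroup.subset_closure (by simp))
  have hsplit : h * (y * v) * h⁻¹ = (h * y * h⁻¹) * (h * v * h⁻¹) := by group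
  rw [hsplit] at hab'
  have hcom : (h * y * h⁻¹) * (g * u * g⁻¹) = (g * u * g⁻¹) * (h * y * h⁻¹) :=
    hPQ _ (hPn.conj_mem y hyP h) _ (hQn.conj_mem u huQ g)
  refine hN g h ?_
  have key : (h * y * h⁻¹) * ((g * u * g⁻¹) * (h * v * h⁻¹)) =
      (h * y * h⁻¹) * ((h * v * h⁻¹) * (g * u * g⁻¹)) := by
    calc (h * y * h⁻¹) * ((g * u * g⁻¹) * (h * v * h⁻¹))
        = ((h * y * h⁻¹) * (g * u * g⁻¹)) * (h * v * h⁻¹) := by group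
      _ = ((g * u * g⁻¹) * (h * y * h⁻¹)) * (h * v * h⁻¹) := by rw [hcom]
      _ = (g * u * g⁻¹) * ((h * y * h⁻¹) * (h * v * h⁻¹)) := by group
      _ = ((h * y * h⁻¹) * (h * v * h⁻¹)) * (g * u * g⁻¹) := hab'
      _ = (h * y * h⁻¹) * ((h * v * h⁻¹) * (g * u * g⁻¹)) := by group
  exact mul_left_cancel key

end CCCAux
theorem nilpotent_two_nonabelian_sylows_ccc_P4_C4 (G : Type*) [Group G] [Finite G]
    (hnil : Group.IsNilpotent G) (p q : ℕ) (hp : p.Prime) (hq : q.Prime) (hpq : p ≠ q)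
    (P : Sylow p G) (Q : Sylow q G)
    (hP : ¬ ∀ a b : (P : Subgroup G), a * b = b * a)
    (hQ : ¬ ∀ a b : (Q : Subgroup G), a * b = b * a) :
    HasInducedP4 (cccGraph G) ∧ HasInducedCycle (cccGraph G) 4 ∧
      ¬ IsCograph (cccGraph G) ∧ ¬ IsChordal (cccGraph G) := by
  haveI := Fact.mk hp
  haveI := Fact.mk hq
  have hnorm : ∀ (r : ℕ) (_ : Fact r.Prime) (R : Sylow r G), (R : Subgroup G).Normal :=
    (isNilpotent_of_finite_tfae.out 0 3).mp hnil
  have hPn : (P : Subgroup G).Normal := hnorm p ⟨hp⟩ P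
  have hQn : (Q : Subgroup G).Normal := hnorm q ⟨hq⟩ Q
  have hPQ : ∀ a ∈ (P : Subgroup G), ∀ b ∈ (Q : Subgroup G), a * b = b * a := by
    intro a ha b hb
    exact Subgroup.commute_of_normal_of_disjoint _ _ hPn hQn
      (IsPGroup.disjoint_of_ne p q hpq _ _ P.isPGroup' Q.isPGroup') a b ha hb
  obtain ⟨x, y, hxP, hyP, NCp⟩ := sylow_exists_noncomm hnil hp P hP
  obtain ⟨u, v, huQ, hvQ, NCq⟩ := sylow_exists_noncomm hnil hq Q hQ
  have hxy : ¬ x * y = y * x := by have := NCp 1 1; simpa using this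
  have huv : ¬ u * v = v * u := by have := NCq 1 1; simpa using this
  have hx1 : x ≠ 1 := by rintro rfl; exact hxy (by group)
  have hy1 : y ≠ 1 := by rintro rfl; exact hxy (by group)
  have hu1 : u ≠ 1 := by rintro rfl; exact huv (by group)
  have hv1 : v ≠ 1 := by rintro rfl; exact huv (by group)
  have hxZ : x ∉ Subgroup.center G := fun h => hxy (Subgroup.mem_center_iff.mp h y).symm
  have hyZ : y ∉ Subgroup.center G := fun h => hxy (Subgroup.mem_center_iff.mp h x)
  have huZ : u ∉ Subgroup.center G := fun h => huv (Subgroup.mem_center_iff.mp h v).symm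
  have hvZ : v ∉ Subgroup.center G := fun h => huv (Subgroup.mem_center_iff.mp h u)
  have hyv : y * v = v * y := hPQ y hyP v hvQ
  have hyu : y * u = u * y := hPQ y hyP u huQ
  have hxu : x * u = u * x := hPQ x hxP u huQ
  have hxv : x * v = v * x := hPQ x hxP v hvQ
  have hyvZ : y * v ∉ Subgroup.center G := by
    intro h
    have h1 : u * (y * v) = (y * v) * u := Subgroup.mem_center_iff.mp h u
    apply huv
    have h2 : y * (u * v) = y * (v * u) := by
      calc y * (u * v) = (u * y) * v := by rw [← mul_assoc, hyu]
        _ = u * (y * v) := by rw [mul_assoc]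
        _ = (y * v) * u := h1
        _ = y * (v * u) := by rw [mul_assoc]
    exact mul_left_cancel h2
  obtain ⟨jx, hjx⟩ := exists_order_eq_pow hp P hxP
  obtain ⟨jy, hjy⟩ := exists_order_eq_pow hp P hyP
  obtain ⟨ju, hju⟩ := exists_order_eq_pow hq Q huQ
  obtain ⟨jv, hjv⟩ := exists_order_eq_pow hq Q hvQ
  have hdvd : ∀ (r : ℕ) (w : G) (j : ℕ), w ≠ 1 → orderOf w = r ^ j → r ∣ orderOf w := by
    intro r w j hw hj
    rw [hj]
    refine dvd_pow_self r ?_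
    rintro rfl
    rw [pow_zero] at hj
    exact hw (orderOf_eq_one_iff.mp hj)
  have hpdx := hdvd p x jx hx1 hjx
  have hpdy := hdvd p y jy hy1 hjy
  have hqdu := hdvd q u ju hu1 hju
  have hqdv := hdvd q v jv hv1 hjv
  have hndvd : ∀ (r s : ℕ), r.Prime → s.Prime → r ≠ s → ∀ (w : G) (j : ℕ),
      orderOf w = s ^ j → ¬ r ∣ orderOf w := by
    intro r s hr hs hrs w j hj hd
    rw [hj] at hd
    exact hrs ((Nat.prime_dvd_prime_iff_eq hr hs).mp (hr.dvd_of_dvd_pow hd))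
  have hnqx := hndvd q p hq hp (Ne.symm hpq) x jx hjx
  have hnqy := hndvd q p hq hp (Ne.symm hpq) y jy hjy
  have hnpu := hndvd p q hp hq hpq u ju hju
  have hnpv := hndvd p q hp hq hpq v jv hjv
  have hordyv : orderOf (y * v) = orderOf y * orderOf v := by
    refine Commute.orderOf_mul_eq_mul_orderOf_of_coprime hyv ?_
    rw [hjy, hjv]
    exact Nat.Coprime.pow _ _ ((Nat.coprime_primes hp hq).mpr hpq)
  have hqyv : q ∣ orderOf (y * v) := by rw [hordyv]; exact Dvd.dvd.mul_left hqdv _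
  have hpyv : p ∣ orderOf (y * v) := by rw [hordyv]; exact Dvd.dvd.mul_right hpdy _
  have d_xy : ConjClasses.mk x ≠ ConjClasses.mk y := by
    intro he
    obtain ⟨c, hc⟩ := isConj_iff.mp (ConjClasses.mk_eq_mk_iff_isConj.mp he)
    exact NCp c 1 (by rw [hc]; simp)
  have d_uv : ConjClasses.mk u ≠ ConjClasses.mk v := by
    intro he
    obtain ⟨c, hc⟩ := isConj_iff.mp (ConjClasses.mk_eq_mk_iff_isConj.mp he)
    exact NCq c 1 (by rw [hc]; simp)
  have d_xu := mk_ne_of_prime_dvd hpdx hnpu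
  have d_xv := mk_ne_of_prime_dvd hpdx hnpv
  have d_uy : ConjClasses.mk u ≠ ConjClasses.mk y := mk_ne_of_prime_dvd hqdu hnqy
  have d_yv : ConjClasses.mk y ≠ ConjClasses.mk v := (mk_ne_of_prime_dvd hqdv hnqy).symm
  have d_xyv : ConjClasses.mk x ≠ ConjClasses.mk (y * v) :=
    (mk_ne_of_prime_dvd hqyv hnqx).symm
  have d_uyv : ConjClasses.mk u ≠ ConjClasses.mk (y * v) :=
    (mk_ne_of_prime_dvd hpyv hnpu).symm
  have d_yyv : ConjClasses.mk y ≠ ConjClasses.mk (y * v) :=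
    (mk_ne_of_prime_dvd hqyv hnqy).symm
  let vA : NCClass G := ⟨ConjClasses.mk x, x, rfl, hxZ⟩
  let vB : NCClass G := ⟨ConjClasses.mk u, u, rfl, huZ⟩
  let vC : NCClass G := ⟨ConjClasses.mk y, y, rfl, hyZ⟩
  let vD : NCClass G := ⟨ConjClasses.mk (y * v), y * v, rfl, hyvZ⟩
  let vE : NCClass G := ⟨ConjClasses.mk v, v, rfl, hvZ⟩
  have nAB : vA ≠ vB := fun h => d_xu (congrArg Subtype.val h)
  have nAC : vA ≠ vC := fun h => d_xy (congrArg Subtype.val h)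
  have nAD : vA ≠ vD := fun h => d_xyv (congrArg Subtype.val h)
  have nAE : vA ≠ vE := fun h => d_xv (congrArg Subtype.val h)
  have nBC : vB ≠ vC := fun h => d_uy (congrArg Subtype.val h)
  have nBD : vB ≠ vD := fun h => d_uyv (congrArg Subtype.val h)
  have nBE : vB ≠ vE := fun h => d_uv (congrArg Subtype.val h)
  have nCD : vC ≠ vD := fun h => d_yyv (congrArg Subtype.val h)
  have nCE : vC ≠ vE := fun h => d_yv (congrArg Subtype.val h)
  have eAB : (cccGraph G).Adj vA vB := cccAdj nAB rfl rfl hxu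
  have eBC : (cccGraph G).Adj vB vC := cccAdj nBC rfl rfl hyu.symm
  have eCD : (cccGraph G).Adj vC vD := cccAdj nCD rfl rfl (by rw [mul_assoc, hyv])
  have eCE : (cccGraph G).Adj vC vE := cccAdj nCE rfl rfl hyv
  have eEA : (cccGraph G).Adj vE vA := cccAdj (Ne.symm nAE) rfl rfl hxv.symm
  have nadjAC : ¬ (cccGraph G).Adj vA vC := ccc_not_adj rfl rfl NCp
  have nadjBE : ¬ (cccGraph G).Adj vB vE := ccc_not_adj rfl rfl NCq
  have nadjAD : ¬ (cccGraph G).Adj vA vD :=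
    ccc_not_adj_mul hPn hQn hxP hvQ hPQ rfl rfl NCp
  have nadjBD : ¬ (cccGraph G).Adj vB vD :=
    ccc_not_adj_mul' hPn hQn huQ hyP hPQ rfl rfl NCq
  have hP4 : HasInducedP4 (cccGraph G) :=
    ⟨vA, vB, vC, vD, nAB, nAC, nAD, nBC, nBD, nCD, eAB, eBC, eCD, nadjAC, nadjAD, nadjBD⟩
  have hC4 : HasInducedCycle (cccGraph G) 4 := by
    have hcases : ∀ i : ZMod 4, i = 0 ∨ i = 1 ∨ i = 2 ∨ i = 3 := by decide
    refine ⟨fun i : ZMod 4 =>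
      if i = 0 then vA else if i = 1 then vB else if i = 2 then vC else vE, ?_, ?_⟩
    · intro i j hij
      rcases hcases i with rfl | rfl | rfl | rfl <;> rcases hcases j with rfl | rfl | rfl | rfl <;>
        simp only [if_pos, if_neg, show ((0:ZMod 4) = 0) = True by simp,
          show ((1:ZMod 4) = 0) = False by decide, show ((1:ZMod 4) = 1) = True by simp,
          show ((2:ZMod 4) = 0) = False by decide, show ((2:ZMod 4) = 1) = False by decide,
          show ((2:ZMod 4) = 2) = True by simp, show ((3:ZMod 4) = 0) = False by decide,
          show ((3:ZMod 4) = 1) = False by decide, show ((3:ZMod 4) = 2) = False by decide,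
          if_true, if_false] at hij <;>
        first
          | rfl
          | exact absurd hij nAB | exact absurd hij nAB.symm
          | exact absurd hij nAC | exact absurd hij nAC.symm
          | exact absurd hij nAE | exact absurd hij nAE.symm
          | exact absurd hij nBC | exact absurd hij nBC.symm
          | exact absurd hij nBE | exact absurd hij nBE.symm
          | exact absurd hij nCE | exact absurd hij nCE.symm
    · intro i j
      rcases hcases i with rfl | rfl | rfl | rfl <;> rcases hcases j with rfl | rfl | rfl | rfl <;>
        simp only [if_pos, if_neg, show ((0:ZMod 4) = 0) = True by simp,
          show ((1:ZMod 4) = 0) = False by decide, show ((1:ZMod 4) = 1) = True by simp,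
          show ((2:ZMod 4) = 0) = False by decide, show ((2:ZMod 4) = 1) = False by decide,
          show ((2:ZMod 4) = 2) = True by simp, show ((3:ZMod 4) = 0) = False by decide,
          show ((3:ZMod 4) = 1) = False by decide, show ((3:ZMod 4) = 2) = False by decide,
          if_true, if_false] <;>
        first
          | exact iff_of_true (by first
              | exact eAB | exact eAB.symm | exact eBC | exact eBC.symm
              | exact eCE | exact eCE.symm | exact eEA | exact eEA.symm) (by decide)
          | exact iff_of_false (by first
              | exact (cccGraph G).irrefl
              | exact nadjAC | exact fun hadj => nadjAC hadj.symm
              | exact nadjBE | exact fun hadj => nadjBE hadj.symm) (by decide)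
  exact ⟨hP4, hC4, fun hcog => hcog hP4, fun hch => hch 4 le_rfl hC4⟩
end
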